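/- Let d > 0 and λ_p > 0 be reals and set K̄ = λ_p π d². Define V(r) = 2π d² − 2 d² arccos( r/(2d) ) + r √( d² − r²/4 ) for d ≤ r < 2d and V(r) = 2π d² for r ≥ 2d, and define P_r(r) = (2 / (λ_p V(r) − K̄)) · [ 1 − K̄ (1 − e^{−λ_p V(r)}) / ( λ_p V(r) (1 − e^{−K̄}) ) ] for d ≤ r < 2d and P_r(r) = (1 − e^{−K̄}) / K̄ for r ≥ 2d. Then lim_{ρ → ∞} (1/(π ρ²)) · ( 2π λ_p ∫_d^ρ P_r(r) r dr + 1 ) = λ_p (1 − e^{−K̄}) / K̄ = (1 − e^{−K̄}) / (π d²). -/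

import Mathlib

open Real Filter MeasureTheory intervalIntegral

/-- The computational core of Theorem 3 (network secrecy throughput): with the Matérn
retention probability `Pr` (from Lemma 1) built from the union area `V`,
`lim_{ρ→∞} (1/(πρ²)) (2π λ_p ∫_d^ρ Pr(r) r dr + 1) = λ_p (1 − e^(−K̄))/K̄
 = (1 − e^(−K̄))/(π d²)`, where `K̄ = λ_p π d²`. -/
theorem matern_density_limit
    (d lamp : ℝ) (hd : 0 < d) (hlamp : 0 < lamp)
    (K : ℝ) (hK : K = lamp * Real.pi * d ^ 2)
    (V Pr : ℝ → ℝ)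
    (hV₁ : ∀ r, d ≤ r → r < 2 * d →
      V r = 2 * Real.pi * d ^ 2 - 2 * d ^ 2 * Real.arccos (r / (2 * d)) +
        r * Real.sqrt (d ^ 2 - r ^ 2 / 4))
    (hV₂ : ∀ r, 2 * d ≤ r → V r = 2 * Real.pi * d ^ 2)
    (hPr₁ : ∀ r, d ≤ r → r < 2 * d →
      Pr r = (2 / (lamp * V r - K)) *
        (1 - K * (1 - Real.exp (-(lamp * V r))) /
          (lamp * V r * (1 - Real.exp (-K)))))
    (hPr₂ : ∀ r, 2 * d ≤ r → Pr r = (1 - Real.exp (-K)) / K) :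
    Tendsto (fun ρ : ℝ =>
        (1 / (Real.pi * ρ ^ 2)) * (2 * Real.pi * lamp * (∫ r in d..ρ, Pr r * r) + 1))
      atTop (nhds (lamp * (1 - Real.exp (-K)) / K)) ∧
    lamp * (1 - Real.exp (-K)) / K = (1 - Real.exp (-K)) / (Real.pi * d ^ 2) := by
  have hK0 : 0 < K := by rw [hK]; positivity
  have heK : Real.exp (-K) < 1 := by
    rw [Real.exp_lt_one_iff]; linarith
  set c : ℝ := (1 - Real.exp (-K)) / K with hc
  -- the explicit formula for V on [d, 2d]
  set W : ℝ → ℝ := fun r => 2 * Real.pi * d ^ 2 - 2 * d ^ 2 * Real.arccos (r / (2 * d)) +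
      r * Real.sqrt (d ^ 2 - r ^ 2 / 4) with hWdef
  have hdd : d ≤ 2 * d := by linarith
  have hW2d : W (2 * d) = 2 * Real.pi * d ^ 2 := by
    have h1 : (2 * d) / (2 * d) = 1 := div_self (by positivity)
    have h2 : d ^ 2 - (2 * d) ^ 2 / 4 = 0 := by ring
    simp [hWdef, h1, h2, Real.arccos_one]
  have hVW : ∀ r ∈ Set.Icc d (2 * d), V r = W r := by
    intro r hr
    rcases lt_or_eq_of_le hr.2 with h | h
    · exact hV₁ r hr.1 h
    · rw [h, hV₂ _ le_rfl, hW2d]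
  -- lower bound for W on [d, 2d]
  have hWlb : ∀ r ∈ Set.Icc d (2 * d), 4 * Real.pi * d ^ 2 / 3 ≤ W r := by
    intro r hr
    have hr0 : 0 < r := lt_of_lt_of_le hd hr.1
    have hx1 : r / (2 * d) ≤ 1 := by
      rw [div_le_one (by positivity)]; exact hr.2
    have hx2 : (1 : ℝ) / 2 ≤ r / (2 * d) := by
      rw [div_le_div_iff₀ (by norm_num) (by positivity)]; linarith [hr.1]
    have harc : Real.arccos (r / (2 * d)) ≤ Real.pi / 3 := by
      have h13 : Real.arccos (1 / 2 : ℝ) = Real.pi / 3 := by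
        rw [← Real.cos_pi_div_three]
        exact Real.arccos_cos (by positivity) (by linarith [Real.pi_pos])
      calc Real.arccos (r / (2 * d)) ≤ Real.arccos (1 / 2 : ℝ) :=
            Real.strictAntiOn_arccos.antitoneOn ⟨by norm_num, by norm_num⟩
              ⟨by linarith, hx1⟩ hx2
        _ = Real.pi / 3 := h13
    have hsq : 0 ≤ r * Real.sqrt (d ^ 2 - r ^ 2 / 4) :=
      mul_nonneg hr0.le (Real.sqrt_nonneg _)
    have : 2 * d ^ 2 * Real.arccos (r / (2 * d)) ≤ 2 * d ^ 2 * (Real.pi / 3) := by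
      apply mul_le_mul_of_nonneg_left harc (by positivity)
    simp only [hWdef]
    nlinarith
  have hden1 : ∀ r ∈ Set.Icc d (2 * d), lamp * W r - K ≠ 0 := by
    intro r hr
    have h1 := hWlb r hr
    have h2 : lamp * (4 * Real.pi * d ^ 2 / 3) ≤ lamp * W r :=
      mul_le_mul_of_nonneg_left h1 hlamp.le
    have h3 : lamp * Real.pi * d ^ 2 < lamp * (4 * Real.pi * d ^ 2 / 3) := by
      have := Real.pi_pos
      have := pow_pos hd 2
      nlinarith
    rw [hK]
    exact sub_ne_zero.mpr (lt_of_lt_of_le h3 h2).ne'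
  have hden2 : ∀ r ∈ Set.Icc d (2 * d), lamp * W r * (1 - Real.exp (-K)) ≠ 0 := by
    intro r hr
    have h1 := hWlb r hr
    have h2 : 0 < W r := lt_of_lt_of_le (by positivity) h1
    exact mul_ne_zero (mul_ne_zero hlamp.ne' h2.ne') (by linarith)
  -- the continuous extension g of Pr to [d, 2d]
  set g : ℝ → ℝ := fun r => (2 / (lamp * W r - K)) *
      (1 - K * (1 - Real.exp (-(lamp * W r))) /
        (lamp * W r * (1 - Real.exp (-K)))) with hgdef
  have hWc : Continuous W := by
    simp only [hWdef]
    exact (continuous_const.sub (continuous_const.mul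
        (Real.continuous_arccos.comp (continuous_id.div_const _)))).add
      (continuous_id.mul (Real.continuous_sqrt.comp (by fun_prop)))
  have hgc : ContinuousOn g (Set.Icc d (2 * d)) := by
    apply ContinuousOn.mul
    · exact continuousOn_const.div
        (((continuous_const.mul hWc).sub continuous_const).continuousOn) hden1
    · apply continuousOn_const.sub
      apply ContinuousOn.div
      · fun_prop
      · fun_prop
      · exact hden2
  have hPrg : Set.EqOn Pr g (Set.Icc d (2 * d)) := by
    intro r hr
    rcases lt_or_eq_of_le hr.2 with h | h
    · rw [hPr₁ r hr.1 h, hgdef]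
      simp only [hVW r hr]
    · subst h
      rw [hPr₂ _ le_rfl, hgdef]
      have h2K : lamp * W (2 * d) = 2 * K := by
        rw [hW2d, hK]; ring
      simp only [h2K]
      have he2 : Real.exp (-(2 * K)) = Real.exp (-K) * Real.exp (-K) := by
        rw [← Real.exp_add]; ring_nf
      rw [he2, show (2 : ℝ) * K - K = K by ring]
      have h1e : 1 - Real.exp (-K) ≠ 0 := by linarith
      have hden : (2 * K * (1 - Real.exp (-K))) ≠ 0 :=
        mul_ne_zero (by positivity) h1e
      have hstep : K * (1 - Real.exp (-K) * Real.exp (-K)) / (2 * K * (1 - Real.exp (-K)))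
          = (1 + Real.exp (-K)) / 2 := by
        rw [div_eq_div_iff hden (by norm_num)]
        ring
      rw [hstep]
      field_simp [hK0.ne']
      linear_combination (1 - Real.exp (-K)) * mul_inv_cancel₀ hK0.ne'
  -- continuity of Pr (hence of Pr · r) on [d, 2d]
  have hPrc : ContinuousOn (fun r => Pr r * r) (Set.Icc d (2 * d)) :=
    (hgc.congr hPrg).mul continuousOn_id
  have hint1 : IntervalIntegrable (fun r => Pr r * r) volume d (2 * d) := by
    apply ContinuousOn.intervalIntegrable
    rwa [Set.uIcc_of_le hdd]
  set A : ℝ := ∫ r in d..(2 * d), Pr r * r with hA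
  -- for ρ ≥ 2d, compute the integral
  have hsplit : ∀ ρ : ℝ, 2 * d ≤ ρ →
      (∫ r in d..ρ, Pr r * r) = A + c * (ρ ^ 2 - (2 * d) ^ 2) / 2 := by
    intro ρ hρ
    have heq : Set.EqOn (fun r => Pr r * r) (fun r => c * r) (Set.uIcc (2 * d) ρ) := by
      intro r hr
      rw [Set.uIcc_of_le hρ] at hr
      simp only
      rw [hPr₂ r hr.1]
    have hint2 : IntervalIntegrable (fun r => Pr r * r) volume (2 * d) ρ := by
      apply ContinuousOn.intervalIntegrable
      exact ((continuousOn_const.mul continuousOn_id).congr heq)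
    have h2 : (∫ r in (2 * d)..ρ, Pr r * r) = c * (ρ ^ 2 - (2 * d) ^ 2) / 2 := by
      rw [intervalIntegral.integral_congr heq, intervalIntegral.integral_const_mul,
        integral_id]
      ring
    rw [← intervalIntegral.integral_add_adjacent_intervals hint1 hint2, h2, hA]
  -- the eventual closed form
  have hd2 : 0 < 2 * d := by linarith
  set B : ℝ := 2 * Real.pi * lamp * (A - c * (2 * d) ^ 2 / 2) + 1 with hB
  have hev : (fun ρ : ℝ => lamp * c + B * (Real.pi * ρ ^ 2)⁻¹) =ᶠ[atTop]
      (fun ρ : ℝ =>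
        (1 / (Real.pi * ρ ^ 2)) * (2 * Real.pi * lamp * (∫ r in d..ρ, Pr r * r) + 1)) := by
    filter_upwards [eventually_ge_atTop (2 * d)] with ρ hρ
    have hρ0 : 0 < ρ := lt_of_lt_of_le hd2 hρ
    rw [hsplit ρ hρ]
    have hπρ : Real.pi * ρ ^ 2 ≠ 0 := by positivity
    rw [eq_comm]
    field_simp [hB]
    ring
  have hlim : Tendsto (fun ρ : ℝ => lamp * c + B * (Real.pi * ρ ^ 2)⁻¹) atTop
      (nhds (lamp * c + B * 0)) := by
    apply tendsto_const_nhds.add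
    apply Tendsto.const_mul
    apply Tendsto.inv_tendsto_atTop
    exact (tendsto_pow_atTop (by norm_num)).const_mul_atTop Real.pi_pos
  constructor
  · have : lamp * (1 - Real.exp (-K)) / K = lamp * c + B * 0 := by
      rw [hc]; ring
    rw [this]
    exact hlim.congr' hev
  · rw [hK]
    have : Real.pi * d ^ 2 ≠ 0 := by positivity
    field_simp
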